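/- If p : Fin N → ℝ are nonnegative, sum to at most 1, and some p(ŷ) > 1/2, then ∑_y arcsin √(p y) ≤ (N-1)·arcsin(√((1 - p ŷ)/(N-1))) + π/2, and for N ≥ 100 this is strictly less than N·arcsin(1/√N). -/

import Mathlib

open Real Finset


lemma asq_hasDeriv {x : ℝ} (hx : x ∈ Set.Ioo (0:ℝ) (1/2)) :
    HasDerivAt (fun x => Real.arcsin (Real.sqrt x)) ((2 * Real.sqrt (x*(1-x)))⁻¹) x := by
  obtain ⟨hx0, hx2⟩ := hx
  have hs0 : 0 < Real.sqrt x := Real.sqrt_pos.2 hx0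
  have hs1 : Real.sqrt x < 1 := by
    rw [show (1:ℝ) = Real.sqrt 1 by simp]
    exact Real.sqrt_lt_sqrt hx0.le (by linarith)
  have h := (Real.hasDerivAt_arcsin (by linarith : Real.sqrt x ≠ -1)
      (by linarith : Real.sqrt x ≠ 1)).comp x (Real.hasDerivAt_sqrt hx0.ne')
  refine h.congr_deriv ?_
  rw [Real.sq_sqrt hx0.le, Real.sqrt_mul hx0.le]
  have h1 : (0:ℝ) < Real.sqrt (1 - x) := Real.sqrt_pos.2 (by linarith)
  field_simp

lemma asq_concave : ConcaveOn ℝ (Set.Icc (0:ℝ) (1/2)) (fun x => Real.arcsin (Real.sqrt x)) := by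
  apply AntitoneOn.concaveOn_of_deriv (convex_Icc _ _)
  · exact (Real.continuous_arcsin.comp Real.continuous_sqrt).continuousOn
  · rw [interior_Icc]
    exact fun x hx => (asq_hasDeriv hx).differentiableAt.differentiableWithinAt
  · rw [interior_Icc]
    intro x hx y hy hxy
    rw [(asq_hasDeriv hx).deriv, (asq_hasDeriv hy).deriv]
    have h1 : (0:ℝ) < x * (1-x) := mul_pos hx.1 (by linarith [hx.2])
    have h2 : x * (1-x) ≤ y * (1-y) := by nlinarith [hx.1, hx.2, hy.1, hy.2]
    have h3 : (0:ℝ) < 2 * Real.sqrt (x*(1-x)) := by positivity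
    apply inv_anti₀ h3
    have := Real.sqrt_le_sqrt h2
    linarith

theorem part1 (N : ℕ) (hN : 100 ≤ N)
    (p : Fin N → ℝ) (hp : ∀ y, 0 ≤ p y) (hsum : ∑ y, p y ≤ 1)
    (y0 : Fin N) (hy0 : 1 / 2 < p y0) :
    ∑ y, Real.arcsin (Real.sqrt (p y)) ≤
        ((N : ℝ) - 1) * Real.arcsin (Real.sqrt ((1 - p y0) / ((N : ℝ) - 1))) + Real.pi / 2 := by
  have hNR : (100:ℝ) ≤ (N:ℝ) := by exact_mod_cast hN
  have hN1 : (0:ℝ) < (N:ℝ) - 1 := by linarith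
  set s := Finset.univ.erase y0 with hs
  have hcard : (s.card : ℝ) = (N:ℝ) - 1 := by
    rw [hs, Finset.card_erase_of_mem (Finset.mem_univ _), Finset.card_univ, Fintype.card_fin]
    push_cast
    have : 1 ≤ N := by omega
    rw [Nat.cast_sub this]
    simp
  have hsplit : p y0 + ∑ y ∈ s, p y = ∑ y, p y := Finset.add_sum_erase _ _ (Finset.mem_univ _)
  have hS : ∑ y ∈ s, p y ≤ 1 - p y0 := by linarith
  have hmem : ∀ i ∈ s, p i ∈ Set.Icc (0:ℝ) (1/2) := by
    intro i hi
    refine ⟨hp i, ?_⟩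
    have h1 : p i ≤ ∑ y ∈ s, p y := Finset.single_le_sum (fun j _ => hp j) hi
    linarith
  have key := asq_concave.le_map_sum (t := s) (w := fun _ => ((N:ℝ) - 1)⁻¹) (p := p)
    (fun i _ => by positivity) (by rw [Finset.sum_const, nsmul_eq_mul, hcard]; field_simp) hmem
  simp only [smul_eq_mul, ← Finset.mul_sum] at key
  have hmono : Real.arcsin (Real.sqrt (((N:ℝ)-1)⁻¹ * ∑ y ∈ s, p y)) ≤
      Real.arcsin (Real.sqrt ((1 - p y0) / ((N:ℝ) - 1))) := by
    apply Real.monotone_arcsin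
    apply Real.sqrt_le_sqrt
    rw [div_eq_inv_mul]
    exact mul_le_mul_of_nonneg_left hS (by positivity)
  have hkey2 : ∑ y ∈ s, Real.arcsin (Real.sqrt (p y)) ≤
      ((N:ℝ) - 1) * Real.arcsin (Real.sqrt ((1 - p y0) / ((N:ℝ) - 1))) := by
    have := key.trans hmono
    calc ∑ y ∈ s, Real.arcsin (Real.sqrt (p y))
        = ((N:ℝ)-1) * (((N:ℝ)-1)⁻¹ * ∑ y ∈ s, Real.arcsin (Real.sqrt (p y))) := by
          field_simp
      _ ≤ _ := mul_le_mul_of_nonneg_left this (by linarith)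
  have hy0pi : Real.arcsin (Real.sqrt (p y0)) ≤ Real.pi / 2 := Real.arcsin_le_pi_div_two _
  have hsplit2 : Real.arcsin (Real.sqrt (p y0)) + ∑ y ∈ s, Real.arcsin (Real.sqrt (p y))
      = ∑ y, Real.arcsin (Real.sqrt (p y)) := Finset.add_sum_erase Finset.univ (fun y => Real.arcsin (Real.sqrt (p y))) (Finset.mem_univ y0)
  linarith

lemma keylemma (n z w m : ℝ) (hn : 100 ≤ n) (hz0 : 0 ≤ z)
    (hq : z^2 * (2*(n-1)) ≤ 1) (hw0 : 0 < w) (hw2 : w^2 = 1 - z^2)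
    (hm0 : 0 ≤ m) (hm2 : m^2 = n/2) : (n-1) * (z/w) ≤ m := by
  rw [← mul_div_assoc, div_le_iff₀ hw0]
  have hsq : ((n-1) * z) ^ 2 ≤ (m * w) ^ 2 := by
    have hfac : (0:ℝ) ≤ n/2 + (n-1)^2 := by nlinarith
    have hprod : (0:ℝ) ≤ (1 - z^2 * (2*(n-1))) * (n/2 + (n-1)^2) :=
      mul_nonneg (by linarith) hfac
    have hmw : (m * w) ^ 2 = n/2 * (1 - z^2) := by rw [mul_pow, hm2, hw2]
    nlinarith [sq_nonneg z]
  have hA : (0:ℝ) ≤ (n-1) * z := mul_nonneg (by linarith) hz0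
  have hB : (0:ℝ) ≤ m * w := mul_nonneg hm0 hw0.le
  calc (n-1) * z = Real.sqrt (((n-1) * z)^2) := (Real.sqrt_sq hA).symm
    _ ≤ Real.sqrt ((m * w)^2) := Real.sqrt_le_sqrt hsq
    _ = m * w := Real.sqrt_sq hB

lemma numlemma (m sN : ℝ) (hm0 : 0 ≤ m) (hsN10 : 10 ≤ sN)
    (h2 : m^2 * 2 = sN^2) : m + Real.pi / 2 < sN := by
  have hpi : Real.pi < 3.15 := Real.pi_lt_d2
  have hm708 : m ≤ 0.708 * sN := by
    calc m = Real.sqrt (m^2) := (Real.sqrt_sq hm0).symm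
      _ ≤ Real.sqrt ((0.708*sN)^2) := Real.sqrt_le_sqrt (by nlinarith)
      _ = 0.708*sN := Real.sqrt_sq (by linarith)
  linarith

set_option maxHeartbeats 2000000 in
theorem part2 (N : ℕ) (hN : 100 ≤ N)
    (p : Fin N → ℝ) (hp : ∀ y, 0 ≤ p y) (hsum : ∑ y, p y ≤ 1)
    (y0 : Fin N) (hy0 : 1 / 2 < p y0) :
    ((N : ℝ) - 1) * Real.arcsin (Real.sqrt ((1 - p y0) / ((N : ℝ) - 1))) + Real.pi / 2
      < (N : ℝ) * Real.arcsin (1 / Real.sqrt N) := by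
  have hNR : (100:ℝ) ≤ (N:ℝ) := by exact_mod_cast hN
  have hN1 : (0:ℝ) < (N:ℝ) - 1 := by linarith
  have ht1 : p y0 ≤ 1 :=
    le_trans (Finset.single_le_sum (fun j _ => hp j) (Finset.mem_univ y0)) hsum
  set z := Real.sqrt ((1 - p y0) / ((N:ℝ) - 1)) with hzdef
  have hz0 : 0 ≤ z := Real.sqrt_nonneg _
  have hznum : (0:ℝ) ≤ (1 - p y0) / ((N:ℝ) - 1) := by
    apply div_nonneg (by linarith) (by linarith)
  have hz2 : z ^ 2 = (1 - p y0) / ((N:ℝ) - 1) := Real.sq_sqrt hznum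
  clear_value z
  have hq : z ^ 2 * (2 * ((N:ℝ) - 1)) ≤ 1 := by
    rw [hz2, div_mul_eq_mul_div, div_le_iff₀ hN1]
    nlinarith
  have hsmall : z ^ 2 ≤ 1 / 198 := by
    rw [le_div_iff₀ (by norm_num : (0:ℝ) < 198)]
    nlinarith [sq_nonneg z]
  have hzlt1 : z < 1 := by nlinarith
  set θ := Real.arcsin z with hθdef
  have hθ0 : 0 ≤ θ := Real.arcsin_nonneg.2 hz0
  have hθlt : θ < Real.pi / 2 := Real.arcsin_lt_pi_div_two.2 hzlt1
  have hw0 : (0:ℝ) < Real.sqrt (1 - z ^ 2) := Real.sqrt_pos.2 (by nlinarith)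
  have hw2 : Real.sqrt (1 - z ^ 2) ^ 2 = 1 - z ^ 2 := Real.sq_sqrt (by nlinarith)
  have htan : θ ≤ z / Real.sqrt (1 - z ^ 2) := by
    rcases eq_or_lt_of_le hθ0 with h | h
    · rw [← h]; positivity
    · have := Real.lt_tan h hθlt
      rw [hθdef, Real.tan_arcsin] at this
      exact this.le
  clear_value θ
  set w := Real.sqrt (1 - z ^ 2) with hwdef
  set m := Real.sqrt ((N:ℝ) / 2) with hmdef
  clear_value w m
  have hm0 : 0 ≤ m := Real.sqrt_nonneg _ |>.trans_eq hmdef.symm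
  have hm2 : m ^ 2 = (N:ℝ) / 2 := by rw [hmdef]; exact Real.sq_sqrt (by linarith)
  have hkey : ((N:ℝ) - 1) * (z / w) ≤ m :=
    keylemma (N:ℝ) z w m hNR hz0 hq hw0 hw2 hm0 hm2
  set sN := Real.sqrt (N:ℝ) with hsNdef
  clear_value sN
  have hsN0 : 0 ≤ sN := Real.sqrt_nonneg _ |>.trans_eq hsNdef.symm
  have hsN2 : sN ^ 2 = (N:ℝ) := by rw [hsNdef]; exact Real.sq_sqrt (by linarith)
  have hsN10 : 10 ≤ sN := by
    have h100 : Real.sqrt 100 = 10 := by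
      rw [show (100:ℝ) = 10^2 by norm_num, Real.sqrt_sq (by norm_num)]
    rw [hsNdef, ← h100]
    exact Real.sqrt_le_sqrt hNR
  have hmainlt : m + Real.pi / 2 < sN := numlemma m sN hm0 hsN10 (by rw [hm2, hsN2]; ring)
  have hrhs : sN ≤ (N:ℝ) * Real.arcsin (1 / sN) := by
    have h1 : (1:ℝ)/sN ≤ 1 := by rw [div_le_one (by linarith)]; linarith
    have h0 : (0:ℝ) ≤ 1/sN := by positivity
    have ha0 : 0 ≤ Real.arcsin (1/sN) := Real.arcsin_nonneg.2 h0
    have hsin : Real.sin (Real.arcsin (1/sN)) = 1/sN := Real.sin_arcsin (by linarith) h1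
    have hle : 1/sN ≤ Real.arcsin (1/sN) := by
      have := Real.sin_le ha0
      rw [hsin] at this
      exact this
    have hmul : (N:ℝ) * (1/sN) ≤ (N:ℝ) * Real.arcsin (1/sN) :=
      mul_le_mul_of_nonneg_left hle (by linarith)
    calc sN = (N:ℝ) * (1/sN) := by
          rw [mul_one_div, eq_div_iff (by linarith : sN ≠ 0)]
          nlinarith
      _ ≤ _ := hmul
  have hθm : ((N:ℝ) - 1) * θ ≤ m :=
    le_trans (mul_le_mul_of_nonneg_left htan (by linarith)) hkey
  linarith

theorem sum_arcsin_sqrt_with_large_entry (N : ℕ) (hN : 100 ≤ N)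
    (p : Fin N → ℝ) (hp : ∀ y, 0 ≤ p y) (hsum : ∑ y, p y ≤ 1)
    (y0 : Fin N) (hy0 : 1 / 2 < p y0) :
    (∑ y, Real.arcsin (Real.sqrt (p y)) ≤
        ((N : ℝ) - 1) * Real.arcsin (Real.sqrt ((1 - p y0) / ((N : ℝ) - 1))) + Real.pi / 2) ∧
    ((N : ℝ) - 1) * Real.arcsin (Real.sqrt ((1 - p y0) / ((N : ℝ) - 1))) + Real.pi / 2
      < (N : ℝ) * Real.arcsin (1 / Real.sqrt N) := by
  exact ⟨part1 N hN p hp hsum y0 hy0, part2 N hN p hp hsum y0 hy0⟩
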